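/- Let B ∈ C^{q×r} be a matrix whose entries all have modulus 1. Then for any x ∈ C^r, ||Bx||_4^4 = 2 ||x||_2^2 ||Bx||_2^2 − q ||x||_4^4 + Σ_1, where Σ_1 = ∑ (∑_{j=1}^q conj(B_{j,k}) B_{j,k'} B_{j,ℓ} conj(B_{j,ℓ'})) conj(x_k) x_{k'} x_ℓ conj(x_{ℓ'}), the outer sum ranging over ordered pairs of distinct indices (k ≠ k') and (ℓ ≠ ℓ') with (k,k') ≠ (ℓ,ℓ'). -/
import Mathlib
open Finset

private lemma sum4_rev {α M : Type*} [Fintype α] [AddCommMonoid M]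
    (g : α → α → α → α → M) :
    ∑ a, ∑ b, ∑ c, ∑ d, g a b c d = ∑ d, ∑ c, ∑ b, ∑ a, g a b c d := by
  calc ∑ a, ∑ b, ∑ c, ∑ d, g a b c d
      = ∑ a, ∑ b, ∑ d, ∑ c, g a b c d :=
        Finset.sum_congr rfl fun a _ => Finset.sum_congr rfl fun b _ => Finset.sum_comm
    _ = ∑ a, ∑ d, ∑ b, ∑ c, g a b c d :=
        Finset.sum_congr rfl fun a _ => Finset.sum_comm
    _ = ∑ d, ∑ a, ∑ b, ∑ c, g a b c d := Finset.sum_comm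
    _ = ∑ d, ∑ a, ∑ c, ∑ b, g a b c d :=
        Finset.sum_congr rfl fun d _ => Finset.sum_congr rfl fun a _ => Finset.sum_comm
    _ = ∑ d, ∑ c, ∑ a, ∑ b, g a b c d :=
        Finset.sum_congr rfl fun d _ => Finset.sum_comm
    _ = ∑ d, ∑ c, ∑ b, ∑ a, g a b c d :=
        Finset.sum_congr rfl fun d _ => Finset.sum_congr rfl fun c _ => Finset.sum_comm

private lemma sum_in4 {α β M : Type*} [Fintype α] [Fintype β] [AddCommMonoid M]
    (h : β → α → α → α → α → M) :
    ∑ j, ∑ a, ∑ b, ∑ c, ∑ d, h j a b c d = ∑ a, ∑ b, ∑ c, ∑ d, ∑ j, h j a b c d := by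
  rw [Finset.sum_comm]
  refine Finset.sum_congr rfl fun a _ => ?_
  rw [Finset.sum_comm]
  refine Finset.sum_congr rfl fun b _ => ?_
  rw [Finset.sum_comm]
  refine Finset.sum_congr rfl fun c_ _ => ?_
  rw [Finset.sum_comm]

/-- `ℓ₄` expansion of `‖Bx‖₄⁴` for a matrix with unimodular entries. -/
theorem stmt2 (q r : ℕ) (B : Matrix (Fin q) (Fin r) ℂ) (hB : ∀ j k, ‖B j k‖ = 1)
    (x : Fin r → ℂ) :
    ((∑ j, ‖B.mulVec x j‖ ^ 4 : ℝ) : ℂ) =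
      2 * ((∑ k, ‖x k‖ ^ 2 : ℝ) : ℂ) * ((∑ j, ‖B.mulVec x j‖ ^ 2 : ℝ) : ℂ) -
        (q : ℂ) * ((∑ k, ‖x k‖ ^ 4 : ℝ) : ℂ) +
        ∑ P ∈ Finset.univ.filter
            (fun P : (Fin r × Fin r) × (Fin r × Fin r) =>
              P.1.1 ≠ P.1.2 ∧ P.2.1 ≠ P.2.2 ∧ P.1 ≠ P.2),
          (∑ j, (starRingEnd ℂ) (B j P.1.1) * B j P.1.2 * B j P.2.1 *
              (starRingEnd ℂ) (B j P.2.2)) *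
            ((starRingEnd ℂ) (x P.1.1) * x P.1.2 * x P.2.1 * (starRingEnd ℂ) (x P.2.2)) := by
  classical
  set c := starRingEnd ℂ with hc
  set S : (Fin r × Fin r) × (Fin r × Fin r) → ℂ := fun P =>
    (∑ j, c (B j P.1.1) * B j P.1.2 * B j P.2.1 * c (B j P.2.2)) *
      (c (x P.1.1) * x P.1.2 * x P.2.1 * c (x P.2.2)) with hS
  have hBu : ∀ j k, B j k * c (B j k) = 1 := by
    intro j k
    have := Complex.mul_conj' (B j k)
    rw [hB j k] at this; simpa using this
  have hBu' : ∀ j k, c (B j k) * B j k = 1 := by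
    intro j k; rw [mul_comm]; exact hBu j k
  set N1 : ℂ := ((∑ k, ‖x k‖ ^ 2 : ℝ) : ℂ) with hN1
  set N2 : ℂ := ((∑ j, ‖B.mulVec x j‖ ^ 2 : ℝ) : ℂ) with hN2
  set N4 : ℂ := ((∑ k, ‖x k‖ ^ 4 : ℝ) : ℂ) with hN4
  have hxk : ∀ k, c (x k) * x k = ((‖x k‖^2 : ℝ) : ℂ) := by
    intro k; rw [mul_comm]; push_cast; exact Complex.mul_conj' (x k)
  have hm : ∀ j, B.mulVec x j = ∑ l, B j l * x l := by
    intro j; simp [Matrix.mulVec, dotProduct]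
  -- N2 as a double sum
  have hN2' : N2 = ∑ l, ∑ l', (∑ j, B j l * c (B j l')) * (x l * c (x l')) := by
    rw [hN2]; push_cast
    have : ∀ j, ((‖B.mulVec x j‖ : ℝ) : ℂ)^2 =
        ∑ l, ∑ l', (B j l * c (B j l')) * (x l * c (x l')) := by
      intro j
      rw [← Complex.mul_conj' (B.mulVec x j)]
      rw [hm j, map_sum, Finset.sum_mul_sum]
      apply Finset.sum_congr rfl; intro l _; apply Finset.sum_congr rfl; intro l' _
      simp [map_mul]; ring
    rw [Finset.sum_congr rfl (fun j _ => this j), Finset.sum_comm]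
    apply Finset.sum_congr rfl; intro l _
    rw [Finset.sum_comm]
    apply Finset.sum_congr rfl; intro l' _
    rw [← Finset.sum_mul]
  -- conjugate version
  have hN2'' : N2 = ∑ k, ∑ k', (∑ j, c (B j k) * B j k') * (c (x k) * x k') := by
    have hreal : c N2 = N2 := by rw [hN2]; exact Complex.conj_ofReal _
    calc N2 = c N2 := hreal.symm
      _ = _ := by
        rw [hN2', map_sum]
        apply Finset.sum_congr rfl; intro k _
        rw [map_sum]
        apply Finset.sum_congr rfl; intro k' _
        rw [map_mul, map_sum]
        congr 1
        · apply Finset.sum_congr rfl; intro j _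
          rw [map_mul]; simp [hc]
        · rw [map_mul]; simp [hc]
  -- evaluation lemmas
  have hS1 : ∀ (k l l' : Fin r), S ((k,k),(l,l')) =
      ((‖x k‖^2 : ℝ) : ℂ) * ((∑ j, B j l * c (B j l')) * (x l * c (x l'))) := by
    intro k l l'
    rw [hS]; dsimp only
    have hb : ∀ j : Fin q, c (B j k) * B j k * B j l * c (B j l') = B j l * c (B j l') := by
      intro j; rw [hBu']; ring
    rw [Finset.sum_congr rfl fun j _ => hb j]
    have hx : c (x k) * x k * x l * c (x l') = ((‖x k‖^2 : ℝ) : ℂ) * (x l * c (x l')) := by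
      linear_combination (x l * c (x l')) * hxk k
    rw [hx]; ring
  have hS2 : ∀ (k k' l : Fin r), S ((k,k'),(l,l)) =
      ((‖x l‖^2 : ℝ) : ℂ) * ((∑ j, c (B j k) * B j k') * (c (x k) * x k')) := by
    intro k k' l
    rw [hS]; dsimp only
    have hb : ∀ j : Fin q, c (B j k) * B j k' * B j l * c (B j l) = c (B j k) * B j k' := by
      intro j; linear_combination (c (B j k) * B j k') * hBu j l
    rw [Finset.sum_congr rfl fun j _ => hb j]
    have hx : c (x k) * x k' * x l * c (x l) = ((‖x l‖^2 : ℝ) : ℂ) * (c (x k) * x k') := by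
      linear_combination (c (x k) * x k') * hxk l
    rw [hx]; ring
  have hS3 : ∀ (k k' : Fin r), S ((k,k'),(k,k')) =
      (q : ℂ) * (((‖x k‖^2 : ℝ) : ℂ) * ((‖x k'‖^2 : ℝ) : ℂ)) := by
    intro k k'
    rw [hS]; dsimp only
    have hb : ∀ j : Fin q, c (B j k) * B j k' * B j k * c (B j k') = 1 := by
      intro j; linear_combination (B j k' * c (B j k')) * hBu' j k + hBu j k'
    rw [Finset.sum_congr rfl fun j _ => hb j]
    have hx : c (x k) * x k' * x k * c (x k') =
        ((‖x k‖^2 : ℝ) : ℂ) * ((‖x k'‖^2 : ℝ) : ℂ) := by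
      linear_combination (x k' * c (x k')) * hxk k + ((‖x k‖^2 : ℝ) : ℂ) * hxk k'
    rw [hx]
    simp [Finset.card_univ]
  -- total sum over all P equals LHS
  have hTot : ((∑ j, ‖B.mulVec x j‖ ^ 4 : ℝ) : ℂ) =
      ∑ P : (Fin r × Fin r) × (Fin r × Fin r), S P := by
    push_cast
    have key : ∀ j, ((‖B.mulVec x j‖ : ℝ) : ℂ)^4 =
        ∑ l', ∑ l, ∑ k', ∑ k,
          (c (B j k) * B j k' * B j l * c (B j l')) *
            (c (x k) * x k' * x l * c (x l')) := by
      intro j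
      have h2 : ((‖B.mulVec x j‖ : ℝ) : ℂ)^4 =
          (c (B.mulVec x j)) * (B.mulVec x j) * (B.mulVec x j) * (c (B.mulVec x j)) := by
        have := Complex.mul_conj' (B.mulVec x j)
        calc ((‖B.mulVec x j‖ : ℝ) : ℂ)^4 = ((‖B.mulVec x j‖:ℝ):ℂ)^2 * ((‖B.mulVec x j‖:ℝ):ℂ)^2 := by ring
          _ = _ := by rw [← this]; ring
      rw [h2, hm j, map_sum]
      simp only [Finset.sum_mul, Finset.mul_sum, map_mul]
      apply Finset.sum_congr rfl; intro l' _
      apply Finset.sum_congr rfl; intro l _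
      apply Finset.sum_congr rfl; intro k' _
      apply Finset.sum_congr rfl; intro k _
      ring
    rw [Finset.sum_congr rfl fun j _ => key j, sum_in4]
    have hps : (∑ P : (Fin r × Fin r) × (Fin r × Fin r), S P)
        = ∑ k, ∑ k', ∑ l, ∑ l', S ((k,k'),(l,l')) := by
      rw [Fintype.sum_prod_type, Fintype.sum_prod_type]
      refine Finset.sum_congr rfl fun k _ => Finset.sum_congr rfl fun k' _ => ?_
      exact Fintype.sum_prod_type (f := fun p2 => S ((k,k'), p2))
    rw [hps]
    rw [sum4_rev (fun k k' l l' => S ((k,k'),(l,l')))]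
    apply Finset.sum_congr rfl; intro l' _
    apply Finset.sum_congr rfl; intro l _
    apply Finset.sum_congr rfl; intro k' _
    apply Finset.sum_congr rfl; intro k _
    rw [hS]; dsimp only
    rw [Finset.sum_mul]
  -- decomposition of the total sum
  have hdec : (∑ P : (Fin r × Fin r) × (Fin r × Fin r), S P)
      = (∑ P ∈ Finset.univ.filter
          (fun P : (Fin r × Fin r) × (Fin r × Fin r) =>
            P.1.1 ≠ P.1.2 ∧ P.2.1 ≠ P.2.2 ∧ P.1 ≠ P.2), S P)
        + (∑ P : (Fin r × Fin r) × (Fin r × Fin r),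
            if P.1.1 = P.1.2 then S P else 0)
        + (∑ P : (Fin r × Fin r) × (Fin r × Fin r),
            if P.1.1 ≠ P.1.2 ∧ P.2.1 = P.2.2 then S P else 0)
        + (∑ P : (Fin r × Fin r) × (Fin r × Fin r),
            if P.1.1 ≠ P.1.2 ∧ P.2.1 ≠ P.2.2 ∧ P.1 = P.2 then S P else 0) := by
    rw [Finset.sum_filter]
    rw [← Finset.sum_add_distrib, ← Finset.sum_add_distrib, ← Finset.sum_add_distrib]
    apply Finset.sum_congr rfl; intro P _
    by_cases h1 : P.1.1 = P.1.2 <;> by_cases h2 : P.2.1 = P.2.2 <;>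
      by_cases h3 : P.1 = P.2 <;> simp [h1, h2, h3]
  have hN1s : N1 = ∑ k, ((‖x k‖^2 : ℝ) : ℂ) := by rw [hN1]; push_cast; rfl
  have hN4s : N4 = ∑ k, ((‖x k‖^2 : ℝ) : ℂ) * ((‖x k‖^2 : ℝ) : ℂ) := by
    rw [hN4]; push_cast; apply Finset.sum_congr rfl; intro k _; ring
  -- piece 1
  have hA : (∑ P : (Fin r × Fin r) × (Fin r × Fin r),
      if P.1.1 = P.1.2 then S P else 0) = N1 * N2 := by
    rw [Fintype.sum_prod_type, Fintype.sum_prod_type]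
    have step : ∀ k : Fin r, (∑ k' : Fin r, ∑ p2 : Fin r × Fin r,
        if k = k' then S ((k,k'), p2) else 0)
        = ((‖x k‖^2 : ℝ) : ℂ) * N2 := by
      intro k
      rw [Finset.sum_comm]
      rw [show (∑ p2 : Fin r × Fin r, ∑ k' : Fin r, if k = k' then S ((k,k'), p2) else 0)
          = ∑ p2 : Fin r × Fin r, S ((k,k), p2) from
        Finset.sum_congr rfl fun p2 _ => by simp [Finset.sum_ite_eq]]
      rw [Fintype.sum_prod_type]
      rw [Finset.sum_congr rfl fun l (_ : l ∈ Finset.univ) =>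
        Finset.sum_congr rfl fun l' (_ : l' ∈ Finset.univ) => hS1 k l l']
      rw [hN2']
      rw [Finset.mul_sum]
      apply Finset.sum_congr rfl; intro l _
      rw [Finset.mul_sum]
    rw [Finset.sum_congr rfl fun k (_ : k ∈ Finset.univ) => step k, ← Finset.sum_mul, ← hN1s]
  -- piece 2
  have hBsum : (∑ P : (Fin r × Fin r) × (Fin r × Fin r),
      if P.1.1 ≠ P.1.2 ∧ P.2.1 = P.2.2 then S P else 0)
      = N1 * N2 - (q : ℂ) * (N1 * N1) := by
    rw [Fintype.sum_prod_type]
    have step : ∀ p1 : Fin r × Fin r, (∑ p2 : Fin r × Fin r,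
        if p1.1 ≠ p1.2 ∧ p2.1 = p2.2 then S (p1, p2) else 0)
        = if p1.1 ≠ p1.2 then
            N1 * ((∑ j, c (B j p1.1) * B j p1.2) * (c (x p1.1) * x p1.2)) else 0 := by
      intro p1
      by_cases h1 : p1.1 = p1.2
      · simp [h1]
      · simp only [h1, not_false_iff, true_and, if_true, ne_eq]
        rw [show (∑ p2 : Fin r × Fin r, if p2.1 = p2.2 then S (p1, p2) else 0)
            = ∑ l : Fin r, S (p1, (l, l)) from by
          rw [Fintype.sum_prod_type]
          exact Finset.sum_congr rfl fun l _ => by simp [Finset.sum_ite_eq]]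
        rw [show (∑ l : Fin r, S (p1, (l, l)))
            = ∑ l : Fin r, ((‖x l‖^2 : ℝ) : ℂ) *
                ((∑ j, c (B j p1.1) * B j p1.2) * (c (x p1.1) * x p1.2)) from
          Finset.sum_congr rfl fun l _ => hS2 p1.1 p1.2 l]
        rw [← Finset.sum_mul, ← hN1s]
    rw [Finset.sum_congr rfl fun p1 (_ : p1 ∈ Finset.univ) => step p1]
    have split : ∀ p1 : Fin r × Fin r,
        (if p1.1 ≠ p1.2 then
            N1 * ((∑ j, c (B j p1.1) * B j p1.2) * (c (x p1.1) * x p1.2)) else 0)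
        = N1 * ((∑ j, c (B j p1.1) * B j p1.2) * (c (x p1.1) * x p1.2))
          - (if p1.1 = p1.2 then
              N1 * ((∑ j, c (B j p1.1) * B j p1.2) * (c (x p1.1) * x p1.2)) else 0) := by
      intro p1; by_cases h : p1.1 = p1.2 <;> simp [h]
    rw [Finset.sum_congr rfl fun p1 (_ : p1 ∈ Finset.univ) => split p1,
      Finset.sum_sub_distrib]
    have t1 : (∑ p1 : Fin r × Fin r,
        N1 * ((∑ j, c (B j p1.1) * B j p1.2) * (c (x p1.1) * x p1.2))) = N1 * N2 := by
      rw [← Finset.mul_sum, hN2'', Fintype.sum_prod_type]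
    have t2 : (∑ p1 : Fin r × Fin r,
        if p1.1 = p1.2 then
          N1 * ((∑ j, c (B j p1.1) * B j p1.2) * (c (x p1.1) * x p1.2)) else 0)
        = (q : ℂ) * (N1 * N1) := by
      rw [Fintype.sum_prod_type]
      have inner : ∀ k : Fin r, (∑ k' : Fin r,
          if k = k' then N1 * ((∑ j, c (B j k) * B j k') * (c (x k) * x k')) else 0)
          = N1 * ((q : ℂ) * ((‖x k‖^2 : ℝ) : ℂ)) := by
        intro k
        rw [Finset.sum_ite_eq]
        simp only [Finset.mem_univ, if_true]
        rw [Finset.sum_congr rfl fun j (_ : j ∈ Finset.univ) => hBu' j k, hxk k]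
        simp [Finset.card_univ]
      rw [Finset.sum_congr rfl fun k (_ : k ∈ Finset.univ) => inner k]
      rw [← Finset.mul_sum, ← Finset.mul_sum, ← hN1s]; ring
    rw [t1, t2]
  -- piece 3
  have hCsum : (∑ P : (Fin r × Fin r) × (Fin r × Fin r),
      if P.1.1 ≠ P.1.2 ∧ P.2.1 ≠ P.2.2 ∧ P.1 = P.2 then S P else 0)
      = (q : ℂ) * (N1 * N1 - N4) := by
    rw [Fintype.sum_prod_type]
    have step : ∀ p1 : Fin r × Fin r, (∑ p2 : Fin r × Fin r,
        if p1.1 ≠ p1.2 ∧ p2.1 ≠ p2.2 ∧ p1 = p2 then S (p1, p2) else 0)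
        = if p1.1 = p1.2 then 0 else S (p1, p1) := by
      intro p1
      rw [Finset.sum_eq_single p1]
      · by_cases h : p1.1 = p1.2 <;> simp [h]
      · intro p2 _ hne
        have : ¬ (p1.1 ≠ p1.2 ∧ p2.1 ≠ p2.2 ∧ p1 = p2) := by
          rintro ⟨-, -, hh⟩; exact hne hh.symm
        simp [this]
      · intro h; exact absurd (Finset.mem_univ p1) h
    rw [Finset.sum_congr rfl fun p1 (_ : p1 ∈ Finset.univ) => step p1]
    rw [Fintype.sum_prod_type]
    have inner : ∀ k : Fin r, (∑ k' : Fin r,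
        if k = k' then 0 else S ((k,k'),(k,k')))
        = (∑ k' : Fin r, (q : ℂ) * (((‖x k‖^2 : ℝ) : ℂ) * ((‖x k'‖^2 : ℝ) : ℂ)))
          - (q : ℂ) * (((‖x k‖^2 : ℝ) : ℂ) * ((‖x k‖^2 : ℝ) : ℂ)) := by
      intro k
      have ptw : ∀ k' : Fin r, (if k = k' then 0 else S ((k,k'),(k,k')))
          = (q : ℂ) * (((‖x k‖^2 : ℝ) : ℂ) * ((‖x k'‖^2 : ℝ) : ℂ))
            - (if k = k' then
                (q : ℂ) * (((‖x k‖^2 : ℝ) : ℂ) * ((‖x k'‖^2 : ℝ) : ℂ)) else 0) := by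
        intro k'
        by_cases h : k = k'
        · simp [h]
        · simp [h, hS3 k k']
      rw [Finset.sum_congr rfl fun k' (_ : k' ∈ Finset.univ) => ptw k',
        Finset.sum_sub_distrib, Finset.sum_ite_eq]
      simp
    rw [Finset.sum_congr rfl fun k (_ : k ∈ Finset.univ) => inner k,
      Finset.sum_sub_distrib]
    have u1 : (∑ k : Fin r, ∑ k' : Fin r,
        (q : ℂ) * (((‖x k‖^2 : ℝ) : ℂ) * ((‖x k'‖^2 : ℝ) : ℂ))) = (q : ℂ) * (N1 * N1) := by
      rw [hN1s, Finset.sum_mul_sum]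
      simp only [Finset.mul_sum]
    have u2 : (∑ k : Fin r,
        (q : ℂ) * (((‖x k‖^2 : ℝ) : ℂ) * ((‖x k‖^2 : ℝ) : ℂ))) = (q : ℂ) * N4 := by
      rw [hN4s, Finset.mul_sum]
    rw [u1, u2]; ring
  -- finish
  rw [hTot, hdec, hA, hBsum, hCsum]
  ring
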